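/- Let T be a finite tree on vertex set V with vertex weights w : V → ℝ≥0, let v ∈ V, and let q be a neighbor of v. Then W(T(v,q)) ≥ rem(v); that is, the total weight of the connected component of v in the graph T with q deleted is at least rem(v). -/

import Mathlib

/-- The graph `G` with vertex `v` deleted (as a graph on the same vertex set,
with `v` isolated): edges of `G` not incident to `v`. -/
def delVert {V : Type*} (G : SimpleGraph V) (v : V) : SimpleGraph V where
  Adj a b := G.Adj a b ∧ a ≠ v ∧ b ≠ v
  symm := ⟨fun _ _ h => ⟨h.1.symm, h.2.2, h.2.1⟩⟩
  loopless := ⟨fun a h => G.loopless.irrefl a h.1⟩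

open Classical in
/-- `compW G w u` is the total weight of the connected component of `u` in `G`. -/
noncomputable def compW {V : Type*} [Fintype V] (G : SimpleGraph V) (w : V → NNReal)
    (u : V) : NNReal :=
  ∑ x ∈ Finset.univ.filter (fun x => G.Reachable u x), w x

open Classical in
/-- `rem T w v = ∑_{u ∈ N(v)} W(T(u,v)) − max_{u ∈ N(v)} W(T(u,v)) + w v`,
the maximum being `0` when `N(v)` is empty. -/
noncomputable def rem {V : Type*} [Fintype V] (T : SimpleGraph V) (w : V → NNReal)
    (v : V) : NNReal :=
  (∑ u ∈ Finset.univ.filter (fun u => T.Adj v u), compW (delVert T v) w u)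
    - (Finset.univ.filter (fun u => T.Adj v u)).sup (fun u => compW (delVert T v) w u)
    + w v

open Classical Finset SimpleGraph


lemma delVert_le {V : Type*} (G : SimpleGraph V) (v : V) : delVert G v ≤ G := by
  intro a b h; exact h.1

lemma delVert_not_mem_support {V : Type*} {G : SimpleGraph V} {v a b : V}
    (p : (delVert G v).Walk a b) (ha : a ≠ v) : v ∉ p.support := by
  induction p with
  | nil => simpa using ha.symm
  | @cons x y z h p ih =>
    rw [SimpleGraph.Walk.support_cons]
    simp only [List.mem_cons, not_or]
    exact ⟨fun hh => ha hh.symm, ih h.2.2⟩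

lemma tree_not_reach {V : Type*} {T : SimpleGraph V} (hT : T.IsTree) {v u u' : V}
    (hu : T.Adj v u) (hu' : T.Adj v u') (hne : u ≠ u') :
    ¬ (delVert T v).Reachable u u' := by
  rintro ⟨p⟩
  have hvs : v ∉ p.support := delVert_not_mem_support p hu.ne'
  have hedges : ∀ e ∈ p.edges, e ∈ T.edgeSet := fun e he =>
    SimpleGraph.edgeSet_mono (delVert_le T v) (p.edges_subset_edgeSet he)
  let p' : T.Walk u u' := p.transfer T hedges
  have hvs' : v ∉ p'.support := by
    show v ∉ (p.transfer T hedges).support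
    rwa [SimpleGraph.Walk.support_transfer]
  have hvs1 : v ∉ (p'.toPath : T.Walk u u').support :=
    fun h => hvs' (p'.support_bypass_subset h)
  have hp2 : (SimpleGraph.Walk.cons hu.symm hu'.toWalk).IsPath := by
    simp [SimpleGraph.Walk.isPath_def, hu.ne', hne, hu'.ne]
  have := hT.IsAcyclic.path_unique p'.toPath ⟨SimpleGraph.Walk.cons hu.symm hu'.toWalk, hp2⟩
  apply hvs1
  rw [this]
  simp

lemma reach_shift {V : Type*} {T : SimpleGraph V} (hT : T.IsTree) {v q u x : V}
    (hq : T.Adj v q) (hu : T.Adj v u) (hne : u ≠ q)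
    (hx : (delVert T v).Reachable u x) : (delVert T q).Reachable v x := by
  obtain ⟨p⟩ := hx
  have hqs : q ∉ p.support := by
    intro hqs
    exact tree_not_reach hT hu hq hne ⟨p.takeUntil q hqs⟩
  have hedges : ∀ e ∈ p.edges, e ∈ (delVert T q).edgeSet := by
    intro e he
    induction e with
    | h a b =>
      have hadj : (delVert T v).Adj a b := p.edges_subset_edgeSet he
      have ha : a ∈ p.support := SimpleGraph.Walk.fst_mem_support_of_mem_edges p he
      have hb : b ∈ p.support := SimpleGraph.Walk.snd_mem_support_of_mem_edges p he
      exact (SimpleGraph.mem_edgeSet (delVert T q)).mpr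
        ⟨hadj.1, fun h => hqs (h ▸ ha), fun h => hqs (h ▸ hb)⟩
  have hvu : (delVert T q).Adj v u := ⟨hu, hq.ne, hne⟩
  exact ⟨SimpleGraph.Walk.cons hvu (p.transfer (delVert T q) hedges)⟩


/-- in a tree `T`, for any neighbor `q` of `v`,
`W(T(v,q)) ≥ rem(v)`. -/
theorem weight_component_ge_rem
    {V : Type*} [Fintype V] (T : SimpleGraph V) (hT : T.IsTree)
    (w : V → NNReal) (v q : V) (hq : q ∈ T.neighborSet v) :
    rem T w v ≤ compW (delVert T q) w v := by
  classical
  have hq' : T.Adj v q := hq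
  set N : Finset V := Finset.univ.filter (fun u => T.Adj v u) with hN
  have hqN : q ∈ N := by simp [hN, hq']
  set S : V → Finset V := fun u => Finset.univ.filter (fun x => (delVert T v).Reachable u x)
    with hS
  set C : Finset V := Finset.univ.filter (fun x => (delVert T q).Reachable v x) with hC
  -- step 1 : rem ≤ ∑_{u ∈ N.erase q} compW + w v
  have hsup : compW (delVert T v) w q ≤ N.sup (fun u => compW (delVert T v) w u) :=
    Finset.le_sup hqN
  have h1 : rem T w v ≤ (∑ u ∈ N.erase q, compW (delVert T v) w u) + w v := by
    unfold rem
    apply add_le_add_left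
    calc (∑ u ∈ N, compW (delVert T v) w u) - N.sup (fun u => compW (delVert T v) w u)
        ≤ (∑ u ∈ N, compW (delVert T v) w u) - compW (delVert T v) w q :=
          tsub_le_tsub_left hsup _
      _ = ∑ u ∈ N.erase q, compW (delVert T v) w u := by
          rw [← Finset.add_sum_erase N _ hqN, add_tsub_cancel_left]
  refine h1.trans ?_
  -- disjointness of components
  have hdisj : ∀ u ∈ N, ∀ u' ∈ N, u ≠ u' → Disjoint (S u) (S u') := by
    intro u hu u' hu' huu
    rw [Finset.disjoint_left]
    intro x hx hx'
    simp only [hS, Finset.mem_filter] at hx hx'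
    exact tree_not_reach hT (by simpa [hN] using hu) (by simpa [hN] using hu') huu
      (hx.2.trans hx'.2.symm)
  -- sum over erase = sum over biUnion
  have h2 : (∑ u ∈ N.erase q, compW (delVert T v) w u)
      = ∑ x ∈ (N.erase q).biUnion S, w x := by
    rw [Finset.sum_biUnion]
    · rfl
    · intro u hu u' hu' huu
      exact hdisj u (Finset.mem_of_mem_erase hu) u' (Finset.mem_of_mem_erase hu') huu
  have hvnot : v ∉ (N.erase q).biUnion S := by
    simp only [Finset.mem_biUnion, not_exists]
    intro u hu
    obtain ⟨hu, hv⟩ := hu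
    simp only [hS, Finset.mem_filter] at hv
    obtain ⟨p⟩ := hv.2
    have huN : T.Adj v u := by simpa [hN] using Finset.mem_of_mem_erase hu
    exact delVert_not_mem_support p huN.ne' p.end_mem_support
  have hsub : insert v ((N.erase q).biUnion S) ⊆ C := by
    intro x hx
    rcases Finset.mem_insert.mp hx with rfl | hx
    · exact Finset.mem_filter.mpr ⟨Finset.mem_univ _, SimpleGraph.Reachable.refl _⟩
    · simp only [Finset.mem_biUnion] at hx
      obtain ⟨u, hu, hxu⟩ := hx
      simp only [hS, Finset.mem_filter] at hxu
      have huN : T.Adj v u := by simpa [hN] using Finset.mem_of_mem_erase hu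
      have huq : u ≠ q := Finset.ne_of_mem_erase hu
      simp only [hC, Finset.mem_filter]
      exact ⟨Finset.mem_univ x, reach_shift hT hq' huN huq hxu.2⟩
  calc (∑ u ∈ N.erase q, compW (delVert T v) w u) + w v
      = ∑ x ∈ insert v ((N.erase q).biUnion S), w x := by
        rw [Finset.sum_insert hvnot, h2, add_comm]
    _ ≤ ∑ x ∈ C, w x := Finset.sum_le_sum_of_subset hsub
    _ = compW (delVert T q) w v := rfl
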